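/- Let f(r) be a C² function on an interval with r > 0 and λ ∈ ℝ. Then (2 - (r²f)'')/r² = 4λ for all r in the interval if and only if f(r) = 1 + a₁/r + a₂/r² - (λ/3)r² for some constants a₁, a₂. -/

import Mathlib

open Set Filter

private lemma const_of_deriv_zero {s : Set ℝ} (hs : IsOpen s) (hc : Convex ℝ s)
    {p : ℝ → ℝ} (hd : DifferentiableOn ℝ p s) (h0 : ∀ x ∈ s, deriv p x = 0)
    {x y : ℝ} (hx : x ∈ s) (hy : y ∈ s) : p x = p y := by
  refine hc.is_const_of_fderivWithin_eq_zero hd (fun z hz => ?_) hx hy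
  rw [fderivWithin_of_isOpen hs hz, ← toSpanSingleton_deriv, h0 z hz]
  ext; simp

theorem stmt_11 (a b lam : ℝ) (ha : 0 ≤ a) (hab : a < b) (f : ℝ → ℝ)
    (hf : ContDiffOn ℝ 2 f (Set.Ioo a b)) :
    (∀ r ∈ Set.Ioo a b,
      (2 - iteratedDeriv 2 (fun r' => r'^2 * f r') r) / r^2 = 4 * lam)
    ↔ ∃ a₁ a₂ : ℝ, ∀ r ∈ Set.Ioo a b,
        f r = 1 + a₁/r + a₂/r^2 - (lam/3) * r^2 := by
  have hopen : IsOpen (Set.Ioo a b) := isOpen_Ioo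
  have hconv : Convex ℝ (Set.Ioo a b) := convex_Ioo a b
  have hpos : ∀ r ∈ Set.Ioo a b, 0 < r := fun r hr => lt_of_le_of_lt ha hr.1
  set g : ℝ → ℝ := fun r' => r'^2 * f r' with hg_def
  have hit2 : iteratedDeriv 2 g = deriv (deriv g) := by
    rw [iteratedDeriv_succ, iteratedDeriv_one]
  constructor
  · intro H
    -- g is C² on Ioo
    have hg : ContDiffOn ℝ 2 g (Set.Ioo a b) := by
      exact ((contDiff_id.pow 2).contDiffOn).mul hf
    have hg' : ContDiffOn ℝ 1 (deriv g) (Set.Ioo a b) :=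
      hg.deriv_of_isOpen hopen (by norm_num)
    have hgdiff : DifferentiableOn ℝ g (Set.Ioo a b) := hg.differentiableOn (by norm_num)
    have hg'diff : DifferentiableOn ℝ (deriv g) (Set.Ioo a b) :=
      hg'.differentiableOn (by norm_num)
    -- second derivative identity
    have H2 : ∀ r ∈ Set.Ioo a b, deriv (deriv g) r = 2 - 4 * lam * r^2 := by
      intro r hr
      have hr0 : r ≠ 0 := (hpos r hr).ne'
      have := H r hr
      rw [hit2] at this
      field_simp at this
      linarith [this]
    -- first integration
    set φ : ℝ → ℝ := fun r => 2*r - (4*lam/3)*r^3 with hφ_def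
    have hφ : ∀ r : ℝ, HasDerivAt φ (2 - 4*lam*r^2) r := by
      intro r
      have : HasDerivAt φ (2*1 - (4*lam/3)*(3*r^2)) r := by
        exact ((hasDerivAt_id r).const_mul 2).sub
          (((hasDerivAt_pow 3 r)).const_mul (4*lam/3) |>.congr_deriv (by ring))
      convert this using 1; ring
    set p : ℝ → ℝ := fun r => deriv g r - φ r with hp_def
    have hpdiff : DifferentiableOn ℝ p (Set.Ioo a b) :=
      hg'diff.sub (fun r _ => ((hφ r).differentiableAt).differentiableWithinAt)
    have hp0 : ∀ r ∈ Set.Ioo a b, deriv p r = 0 := by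
      intro r hr
      have hd1 : DifferentiableAt ℝ (deriv g) r :=
        hg'diff.differentiableAt (hopen.mem_nhds hr)
      rw [hp_def]
      rw [deriv_fun_sub hd1 (hφ r).differentiableAt, H2 r hr, (hφ r).deriv]
      ring
    set r₀ : ℝ := (a+b)/2 with hr₀_def
    have hr₀ : r₀ ∈ Set.Ioo a b := ⟨by linarith, by linarith⟩
    set a₁ : ℝ := p r₀ with ha₁_def
    have hderivg : ∀ r ∈ Set.Ioo a b, deriv g r = φ r + a₁ := by
      intro r hr
      have := const_of_deriv_zero hopen hconv hpdiff hp0 hr hr₀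
      have ha₁' : a₁ = deriv g r₀ - φ r₀ := rfl
      simp only [hp_def] at this
      linarith [this, ha₁']
    -- second integration
    set ψ : ℝ → ℝ := fun r => r^2 - (lam/3)*r^4 + a₁*r with hψ_def
    have hψ : ∀ r : ℝ, HasDerivAt ψ (φ r + a₁) r := by
      intro r
      have : HasDerivAt ψ (2*r^1 - (lam/3)*(4*r^3) + a₁*1) r :=
        (((hasDerivAt_pow 2 r).congr_deriv (by norm_num)).sub
          ((hasDerivAt_pow 4 r).const_mul (lam/3) |>.congr_deriv (by ring))).add
          ((hasDerivAt_id r).const_mul a₁)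
      convert this using 1; simp [hφ_def]; ring
    set q : ℝ → ℝ := fun r => g r - ψ r with hq_def
    have hqdiff : DifferentiableOn ℝ q (Set.Ioo a b) :=
      hgdiff.sub (fun r _ => ((hψ r).differentiableAt).differentiableWithinAt)
    have hq0 : ∀ r ∈ Set.Ioo a b, deriv q r = 0 := by
      intro r hr
      have hd1 : DifferentiableAt ℝ g r := hgdiff.differentiableAt (hopen.mem_nhds hr)
      rw [hq_def, deriv_fun_sub hd1 (hψ r).differentiableAt, hderivg r hr, (hψ r).deriv]
      ring
    set a₂ : ℝ := q r₀ with ha₂_def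
    refine ⟨a₁, a₂, fun r hr => ?_⟩
    have hgr : g r = ψ r + a₂ := by
      have := const_of_deriv_zero hopen hconv hqdiff hq0 hr hr₀
      have ha₂' : a₂ = g r₀ - ψ r₀ := rfl
      simp only [hq_def] at this
      linarith [this, ha₂']
    have hr0 : r ≠ 0 := (hpos r hr).ne'
    clear_value a₁ a₂
    have : r^2 * f r = r^2 - (lam/3)*r^4 + a₁*r + a₂ := by
      rw [show r^2 * f r = g r from rfl, hgr, hψ_def]
    field_simp
    linear_combination 3 * this
  · rintro ⟨a₁, a₂, hF⟩ r hr
    have hr0 : (0:ℝ) < r := hpos r hr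
    set G : ℝ → ℝ := fun r' => r'^2 + a₁*r' + a₂ - (lam/3)*r'^4 with hG_def
    have heq : g =ᶠ[nhds r] G := by
      filter_upwards [hopen.mem_nhds hr] with x hx
      have hx0 : x ≠ 0 := (hpos x hx).ne'
      simp only [hg_def, hF x hx, hG_def]
      field_simp
    have hG1 : deriv G = fun r' => 2*r' + a₁ - (4*lam/3)*r'^3 := by
      funext x
      have h := ((((hasDerivAt_pow 2 x).add (hasDerivAt_id' x |>.const_mul a₁)).add_const
          a₂).sub ((hasDerivAt_pow 4 x).const_mul (lam/3)))
      rw [(show HasDerivAt G _ x from h).deriv]; push_cast; ring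
    have hG2 : deriv (deriv G) r = 2 - 4*lam*r^2 := by
      rw [hG1]
      have h := ((hasDerivAt_id' r |>.const_mul 2).add_const a₁).sub
          ((hasDerivAt_pow 3 r).const_mul (4*lam/3))
      rw [(show HasDerivAt (fun r' => 2*r' + a₁ - (4*lam/3)*r'^3) _ r from h).deriv]; push_cast; ring
    have : iteratedDeriv 2 g r = 2 - 4*lam*r^2 := by
      rw [hit2, heq.deriv.deriv.eq_of_nhds, hG2]
    rw [show iteratedDeriv 2 (fun r' => r'^2 * f r') r = 2 - 4*lam*r^2 from this]
    field_simp
    ring
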